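/- Let e, f ∈ E₁₀ satisfy ⟨e, e⟩ = ⟨f, f⟩ = 0 and ⟨e, f⟩ = 1, and let M = {v ∈ E₁₀ : ⟨v, e⟩ = 0 and ⟨v, f⟩ = 0} be the orthogonal complement of the span of e and f. Then M, with the restricted bilinear form, is isometric to the negative definite E₈ lattice: there exists a ℤ-linear bijection φ : M → ℤ⁸ such that ⟨v, w⟩ = q(φ(v), φ(w)) for all v, w ∈ M, where q is the bilinear form on ℤ⁸ with Gram matrix E₈(−1). (Conclusion of the proof of Proposition 2.8(2): the complement is even, unimodular and definite of rank 8, hence isomorphic to E₈ up to sign.) -/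

import Mathlib

open Matrix BigOperators

/-- The Gram matrix of the even unimodular hyperbolic lattice `E₁₀ = U ⊕ E₈(−1)`:
indices 0,1 span the hyperbolic plane `U`, and indices 2,…,9 carry the negative
definite `E₈` form (diagonal `−2`, entry `1` for vertices adjacent in the `E₈`
Dynkin diagram). -/
def E10Gram : Matrix (Fin 10) (Fin 10) ℤ :=
  !![0, 1,  0,  0,  0,  0,  0,  0,  0,  0;
     1, 0,  0,  0,  0,  0,  0,  0,  0,  0;
     0, 0, -2,  1,  0,  0,  0,  0,  0,  0;
     0, 0,  1, -2,  1,  0,  0,  0,  0,  0;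
     0, 0,  0,  1, -2,  1,  0,  0,  0,  1;
     0, 0,  0,  0,  1, -2,  1,  0,  0,  0;
     0, 0,  0,  0,  0,  1, -2,  1,  0,  0;
     0, 0,  0,  0,  0,  0,  1, -2,  1,  0;
     0, 0,  0,  0,  0,  0,  0,  1, -2,  0;
     0, 0,  0,  0,  1,  0,  0,  0,  0, -2]

/-- The symmetric bilinear form on `E₁₀ = ℤ¹⁰` with Gram matrix `E10Gram`. -/
def E10Pair (v w : Fin 10 → ℤ) : ℤ := ∑ i, ∑ j, v i * E10Gram i j * w j

/-- The Gram matrix of the negative definite `E₈` lattice: diagonal entries `−2` and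
`(i,j)`-entry `1` when `i, j` are adjacent in the `E₈` Dynkin diagram. -/
def E8NegGram : Matrix (Fin 8) (Fin 8) ℤ :=
  !![-2,  1,  0,  0,  0,  0,  0,  0;
      1, -2,  1,  0,  0,  0,  0,  0;
      0,  1, -2,  1,  0,  0,  0,  1;
      0,  0,  1, -2,  1,  0,  0,  0;
      0,  0,  0,  1, -2,  1,  0,  0;
      0,  0,  0,  0,  1, -2,  1,  0;
      0,  0,  0,  0,  0,  1, -2,  0;
      0,  0,  1,  0,  0,  0,  0, -2]

/-- The bilinear form on `ℤ⁸` with Gram matrix `E₈(−1)`. -/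
def E8NegPair (v w : Fin 8 → ℤ) : ℤ := ∑ i, ∑ j, v i * E8NegGram i j * w j



lemma E10Pair_expand (v w : Fin 10 → ℤ) : E10Pair v w =
    v 0 * w 1 + v 1 * w 0
    + v 2 * (-2*w 2 + w 3)
    + v 3 * (w 2 - 2*w 3 + w 4)
    + v 4 * (w 3 - 2*w 4 + w 5 + w 9)
    + v 5 * (w 4 - 2*w 5 + w 6)
    + v 6 * (w 5 - 2*w 6 + w 7)
    + v 7 * (w 6 - 2*w 7 + w 8)
    + v 8 * (w 7 - 2*w 8)
    + v 9 * (w 4 - 2*w 9) := by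
  simp [E10Pair, E10Gram, Fin.sum_univ_succ, (show Fin.succ (0 : Fin 1) = (1 : Fin 2) from rfl), (show Fin.succ (0 : Fin 2) = (1 : Fin 3) from rfl), (show Fin.succ (1 : Fin 2) = (2 : Fin 3) from rfl), (show Fin.succ (0 : Fin 3) = (1 : Fin 4) from rfl), (show Fin.succ (1 : Fin 3) = (2 : Fin 4) from rfl), (show Fin.succ (2 : Fin 3) = (3 : Fin 4) from rfl), (show Fin.succ (0 : Fin 4) = (1 : Fin 5) from rfl), (show Fin.succ (1 : Fin 4) = (2 : Fin 5) from rfl), (show Fin.succ (2 : Fin 4) = (3 : Fin 5) from rfl), (show Fin.succ (3 : Fin 4) = (4 : Fin 5) from rfl), (show Fin.succ (0 : Fin 5) = (1 : Fin 6) from rfl), (show Fin.succ (1 : Fin 5) = (2 : Fin 6) from rfl), (show Fin.succ (2 : Fin 5) = (3 : Fin 6) from rfl), (show Fin.succ (3 : Fin 5) = (4 : Fin 6) from rfl), (show Fin.succ (4 : Fin 5) = (5 : Fin 6) from rfl), (show Fin.succ (0 : Fin 6) = (1 : Fin 7) from rfl), (show Fin.succ (1 : Fin 6) = (2 : Fin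 7) from rfl), (show Fin.succ (2 : Fin 6) = (3 : Fin 7) from rfl), (show Fin.succ (3 : Fin 6) = (4 : Fin 7) from rfl), (show Fin.succ (4 : Fin 6) = (5 : Fin 7) from rfl), (show Fin.succ (5 : Fin 6) = (6 : Fin 7) from rfl), (show Fin.succ (0 : Fin 7) = (1 : Fin 8) from rfl), (show Fin.succ (1 : Fin 7) = (2 : Fin 8) from rfl), (show Fin.succ (2 : Fin 7) = (3 : Fin 8) from rfl), (show Fin.succ (3 : Fin 7) = (4 : Fin 8) from rfl), (show Fin.succ (4 : Fin 7) = (5 : Fin 8) from rfl), (show Fin.succ (5 : Fin 7) = (6 : Fin 8) from rfl), (show Fin.succ (6 : Fin 7) = (7 : Fin 8) from rfl), (show Fin.succ (0 : Fin 8) = (1 : Fin 9) from rfl), (show Fin.succ (1 : Fin 8) = (2 : Fin 9) from rfl), (show Fin.succ (2 : Fin 8) = (3 : Fin 9) from rfl), (show Fin.succ (3 : Fin 8) = (4 : Fin 9) from rfl), (show Fin.succ (4 : Fin 8) = (5 : Fin 9) from rfl), (show Fin.succ (5 : Fin 8) = (6 : Fin 9) from rfl), (show Fin.succ (6 : Fin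 8) = (7 : Fin 9) from rfl), (show Fin.succ (7 : Fin 8) = (8 : Fin 9) from rfl), (show Fin.succ (0 : Fin 9) = (1 : Fin 10) from rfl), (show Fin.succ (1 : Fin 9) = (2 : Fin 10) from rfl), (show Fin.succ (2 : Fin 9) = (3 : Fin 10) from rfl), (show Fin.succ (3 : Fin 9) = (4 : Fin 10) from rfl), (show Fin.succ (4 : Fin 9) = (5 : Fin 10) from rfl), (show Fin.succ (5 : Fin 9) = (6 : Fin 10) from rfl), (show Fin.succ (6 : Fin 9) = (7 : Fin 10) from rfl), (show Fin.succ (7 : Fin 9) = (8 : Fin 10) from rfl), (show Fin.succ (8 : Fin 9) = (9 : Fin 10) from rfl)]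
  ring

lemma E8NegPair_expand (v w : Fin 8 → ℤ) : E8NegPair v w =
    v 0 * (-2*w 0 + w 1)
    + v 1 * (w 0 - 2*w 1 + w 2)
    + v 2 * (w 1 - 2*w 2 + w 3 + w 7)
    + v 3 * (w 2 - 2*w 3 + w 4)
    + v 4 * (w 3 - 2*w 4 + w 5)
    + v 5 * (w 4 - 2*w 5 + w 6)
    + v 6 * (w 5 - 2*w 6)
    + v 7 * (w 2 - 2*w 7) := by
  simp [E8NegPair, E8NegGram, Fin.sum_univ_succ, (show Fin.succ (0 : Fin 1) = (1 : Fin 2) from rfl), (show Fin.succ (0 : Fin 2) = (1 : Fin 3) from rfl), (show Fin.succ (1 : Fin 2) = (2 : Fin 3) from rfl), (show Fin.succ (0 : Fin 3) = (1 : Fin 4) from rfl), (show Fin.succ (1 : Fin 3) = (2 : Fin 4) from rfl), (show Fin.succ (2 : Fin 3) = (3 : Fin 4) from rfl), (show Fin.succ (0 : Fin 4) = (1 : Fin 5) from rfl), (show Fin.succ (1 : Fin 4) = (2 : Fin 5) from rfl), (show Fin.succ (2 : Fin 4) = (3 : Fin 5) from rfl), (show Fin.succ (3 : Fin 4) = (4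 : Fin 5) from rfl), (show Fin.succ (0 : Fin 5) = (1 : Fin 6) from rfl), (show Fin.succ (1 : Fin 5) = (2 : Fin 6) from rfl), (show Fin.succ (2 : Fin 5) = (3 : Fin 6) from rfl), (show Fin.succ (3 : Fin 5) = (4 : Fin 6) from rfl), (show Fin.succ (4 : Fin 5) = (5 : Fin 6) from rfl), (show Fin.succ (0 : Fin 6) = (1 : Fin 7) from rfl), (show Fin.succ (1 : Fin 6) = (2 : Fin 7) from rfl), (show Fin.succ (2 : Fin 6) = (3 : Fin 7) from rfl), (show Fin.succ (3 : Fin 6) = (4 : Fin 7) from rfl), (show Fin.succ (4 : Fin 6) = (5 : Fin 7) from rfl), (show Fin.succ (5 : Fin 6) = (6 : Fin 7) from rfl), (show Fin.succ (0 : Fin 7) = (1 : Fin 8) from rfl), (show Fin.succ (1 : Fin 7) = (2 : Fin 8) from rfl), (show Fin.succ (2 : Fin 7) = (3 : Fin 8) from rfl), (show Fin.succ (3 : Fin 7) = (4 : Fin 8) from rfl), (show Fin.succ (4 : Fin 7) = (5 : Fin 8) from rfl), (show Fin.succ (5 : Fin 7) = (6 : Fin 8) from rfl), (show Fin.succ (6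 : Fin 7) = (7 : Fin 8) from rfl), (show Fin.succ (0 : Fin 8) = (1 : Fin 9) from rfl), (show Fin.succ (1 : Fin 8) = (2 : Fin 9) from rfl), (show Fin.succ (2 : Fin 8) = (3 : Fin 9) from rfl), (show Fin.succ (3 : Fin 8) = (4 : Fin 9) from rfl), (show Fin.succ (4 : Fin 8) = (5 : Fin 9) from rfl), (show Fin.succ (5 : Fin 8) = (6 : Fin 9) from rfl), (show Fin.succ (6 : Fin 8) = (7 : Fin 9) from rfl), (show Fin.succ (7 : Fin 8) = (8 : Fin 9) from rfl), (show Fin.succ (0 : Fin 9) = (1 : Fin 10) from rfl), (show Fin.succ (1 : Fin 9) = (2 : Fin 10) from rfl), (show Fin.succ (2 : Fin 9) = (3 : Fin 10) from rfl), (show Fin.succ (3 : Fin 9) = (4 : Fin 10) from rfl), (show Fin.succ (4 : Fin 9) = (5 : Fin 10) from rfl), (show Fin.succ (5 : Fin 9) = (6 : Fin 10) from rfl), (show Fin.succ (6 : Fin 9) = (7 : Fin 10) from rfl), (show Fin.succ (7 : Fin 9) = (8 : Fin 10) from rfl), (show Fin.succ (8 : Fin 9) = (9 : Fin 10) from rf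l)]
  ring

def tl (v : Fin 10 → ℤ) : Fin 8 → ℤ := fun k => v k.succ.succ

def pr8 (v : Fin 10 → ℤ) (w : Fin 8 → ℤ) : ℤ := E8NegPair (tl v) w

lemma pr8_expand (v : Fin 10 → ℤ) (w : Fin 8 → ℤ) : pr8 v w =
    v 2 * (-2*w 0 + w 1)
    + v 3 * (w 0 - 2*w 1 + w 2)
    + v 4 * (w 1 - 2*w 2 + w 3 + w 7)
    + v 5 * (w 2 - 2*w 3 + w 4)
    + v 6 * (w 3 - 2*w 4 + w 5)
    + v 7 * (w 4 - 2*w 5 + w 6)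
    + v 8 * (w 5 - 2*w 6)
    + v 9 * (w 2 - 2*w 7) := by
  rw [pr8, E8NegPair_expand]; rfl

def hf (w : Fin 8 → ℤ) : ℤ :=
  -(w 0^2+w 1^2+w 2^2+w 3^2+w 4^2+w 5^2+w 6^2+w 7^2)
  + (w 0*w 1 + w 1*w 2 + w 2*w 3 + w 3*w 4 + w 4*w 5 + w 5*w 6 + w 2*w 7)

lemma hf_spec (w : Fin 8 → ℤ) : E8NegPair w w = 2 * hf w := by
  rw [E8NegPair_expand]; unfold hf; ring

def Tmap (w : Fin 8 → ℤ) (v : Fin 10 → ℤ) : Fin 10 → ℤ :=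
  ![v 0 + pr8 v w - hf w * v 1, v 1,
    v 2 - v 1 * w 0, v 3 - v 1 * w 1, v 4 - v 1 * w 2, v 5 - v 1 * w 3,
    v 6 - v 1 * w 4, v 7 - v 1 * w 5, v 8 - v 1 * w 6, v 9 - v 1 * w 7]

lemma Tval0 (w v) : Tmap w v 0 = v 0 + pr8 v w - hf w * v 1 := rfl
lemma Tval1 (w v) : Tmap w v 1 = v 1 := rfl
lemma Tval2 (w v) : Tmap w v 2 = v 2 - v 1 * w 0 := rfl
lemma Tval3 (w v) : Tmap w v 3 = v 3 - v 1 * w 1 := rfl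
lemma Tval4 (w v) : Tmap w v 4 = v 4 - v 1 * w 2 := rfl
lemma Tval5 (w v) : Tmap w v 5 = v 5 - v 1 * w 3 := rfl
lemma Tval6 (w v) : Tmap w v 6 = v 6 - v 1 * w 4 := rfl
lemma Tval7 (w v) : Tmap w v 7 = v 7 - v 1 * w 5 := rfl
lemma Tval8 (w v) : Tmap w v 8 = v 8 - v 1 * w 6 := rfl
lemma Tval9 (w v) : Tmap w v 9 = v 9 - v 1 * w 7 := rfl

lemma Tmap_pair (w : Fin 8 → ℤ) (v v' : Fin 10 → ℤ) :
    E10Pair (Tmap w v) (Tmap w v') = E10Pair v v' := by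
  rw [E10Pair_expand, E10Pair_expand (v := v)]
  simp only [Tval0, Tval1, Tval2, Tval3, Tval4, Tval5, Tval6, Tval7, Tval8, Tval9,
    pr8_expand, hf]
  ring

lemma funext10 {v w : Fin 10 → ℤ} (h0 : v 0 = w 0) (h1 : v 1 = w 1) (h2 : v 2 = w 2)
    (h3 : v 3 = w 3) (h4 : v 4 = w 4) (h5 : v 5 = w 5) (h6 : v 6 = w 6) (h7 : v 7 = w 7)
    (h8 : v 8 = w 8) (h9 : v 9 = w 9) : v = w := by
  funext j; fin_cases j <;> assumption

lemma funext8 {v w : Fin 8 → ℤ} (h0 : v 0 = w 0) (h1 : v 1 = w 1) (h2 : v 2 = w 2)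
    (h3 : v 3 = w 3) (h4 : v 4 = w 4) (h5 : v 5 = w 5) (h6 : v 6 = w 6) (h7 : v 7 = w 7) :
    v = w := by
  funext j; fin_cases j <;> assumption

lemma Tmap_inv (w : Fin 8 → ℤ) (v : Fin 10 → ℤ) :
    Tmap (-w) (Tmap w v) = v := by
  apply funext10 <;>
    simp only [Tval0, Tval1, Tval2, Tval3, Tval4, Tval5, Tval6, Tval7, Tval8, Tval9,
      pr8_expand, hf, Pi.neg_apply] <;> ring

lemma Tmap_add (w : Fin 8 → ℤ) (v v' : Fin 10 → ℤ) :
    Tmap w (v + v') = Tmap w v + Tmap w v' := by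
  apply funext10 <;>
    simp only [Tval0, Tval1, Tval2, Tval3, Tval4, Tval5, Tval6, Tval7, Tval8, Tval9,
      pr8_expand, hf, Pi.add_apply] <;> ring

lemma Tmap_smul (w : Fin 8 → ℤ) (c : ℤ) (v : Fin 10 → ℤ) :
    Tmap w (c • v) = c • Tmap w v := by
  apply funext10 <;>
    simp only [Tval0, Tval1, Tval2, Tval3, Tval4, Tval5, Tval6, Tval7, Tval8, Tval9,
      pr8_expand, hf, Pi.smul_apply, smul_eq_mul] <;> ring
def Smap (v : Fin 10 → ℤ) : Fin 10 → ℤ :=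
  ![v 1, v 0, v 2, v 3, v 4, v 5, v 6, v 7, v 8, v 9]

lemma Sval0 (v) : Smap v 0 = v 1 := rfl
lemma Sval1 (v) : Smap v 1 = v 0 := rfl
lemma Sval2 (v) : Smap v 2 = v 2 := rfl
lemma Sval3 (v) : Smap v 3 = v 3 := rfl
lemma Sval4 (v) : Smap v 4 = v 4 := rfl
lemma Sval5 (v) : Smap v 5 = v 5 := rfl
lemma Sval6 (v) : Smap v 6 = v 6 := rfl
lemma Sval7 (v) : Smap v 7 = v 7 := rfl
lemma Sval8 (v) : Smap v 8 = v 8 := rfl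
lemma Sval9 (v) : Smap v 9 = v 9 := rfl

def Nmap (v : Fin 10 → ℤ) : Fin 10 → ℤ :=
  ![-v 0, -v 1, v 2, v 3, v 4, v 5, v 6, v 7, v 8, v 9]

lemma Nval0 (v) : Nmap v 0 = -v 0 := rfl
lemma Nval1 (v) : Nmap v 1 = -v 1 := rfl
lemma Nval2 (v) : Nmap v 2 = v 2 := rfl
lemma Nval3 (v) : Nmap v 3 = v 3 := rfl
lemma Nval4 (v) : Nmap v 4 = v 4 := rfl
lemma Nval5 (v) : Nmap v 5 = v 5 := rfl
lemma Nval6 (v) : Nmap v 6 = v 6 := rfl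
lemma Nval7 (v) : Nmap v 7 = v 7 := rfl
lemma Nval8 (v) : Nmap v 8 = v 8 := rfl
lemma Nval9 (v) : Nmap v 9 = v 9 := rfl

lemma Smap_pair (v v' : Fin 10 → ℤ) : E10Pair (Smap v) (Smap v') = E10Pair v v' := by
  rw [E10Pair_expand, E10Pair_expand (v := v)]
  simp only [Sval0, Sval1, Sval2, Sval3, Sval4, Sval5, Sval6, Sval7, Sval8, Sval9]
  ring

lemma Nmap_pair (v v' : Fin 10 → ℤ) : E10Pair (Nmap v) (Nmap v') = E10Pair v v' := by
  rw [E10Pair_expand, E10Pair_expand (v := v)]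
  simp only [Nval0, Nval1, Nval2, Nval3, Nval4, Nval5, Nval6, Nval7, Nval8, Nval9]
  ring

lemma Smap_inv (v : Fin 10 → ℤ) : Smap (Smap v) = v := by
  apply funext10 <;> rfl

lemma Nmap_inv (v : Fin 10 → ℤ) : Nmap (Nmap v) = v := by
  apply funext10 <;>
    simp only [Nval0, Nval1, Nval2, Nval3, Nval4, Nval5, Nval6, Nval7, Nval8, Nval9,
      neg_neg]

lemma Smap_add (v v' : Fin 10 → ℤ) : Smap (v + v') = Smap v + Smap v' := by
  apply funext10 <;>
    simp only [Sval0, Sval1, Sval2, Sval3, Sval4, Sval5, Sval6, Sval7, Sval8, Sval9,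
      Pi.add_apply]

lemma Nmap_add (v v' : Fin 10 → ℤ) : Nmap (v + v') = Nmap v + Nmap v' := by
  apply funext10 <;>
    simp only [Nval0, Nval1, Nval2, Nval3, Nval4, Nval5, Nval6, Nval7, Nval8, Nval9,
      Pi.add_apply] <;> ring

lemma Smap_smul (c : ℤ) (v : Fin 10 → ℤ) : Smap (c • v) = c • Smap v := by
  apply funext10 <;>
    simp only [Sval0, Sval1, Sval2, Sval3, Sval4, Sval5, Sval6, Sval7, Sval8, Sval9,
      Pi.smul_apply]

lemma Nmap_smul (c : ℤ) (v : Fin 10 → ℤ) : Nmap (c • v) = c • Nmap v := by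
  apply funext10 <;>
    simp only [Nval0, Nval1, Nval2, Nval3, Nval4, Nval5, Nval6, Nval7, Nval8, Nval9,
      Pi.smul_apply, smul_eq_mul] <;> ring

/-- An isometry of the `E₁₀` lattice. -/
structure Iso where
  toFun : (Fin 10 → ℤ) → (Fin 10 → ℤ)
  invFun : (Fin 10 → ℤ) → (Fin 10 → ℤ)
  left_inv : ∀ v, invFun (toFun v) = v
  right_inv : ∀ v, toFun (invFun v) = v
  add : ∀ u v, toFun (u + v) = toFun u + toFun v
  smul : ∀ (c : ℤ) v, toFun (c • v) = c • toFun v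
  pair : ∀ v w, E10Pair (toFun v) (toFun w) = E10Pair v w

def Iso.id : Iso where
  toFun := fun v => v
  invFun := fun v => v
  left_inv := fun _ => rfl
  right_inv := fun _ => rfl
  add := fun _ _ => rfl
  smul := fun _ _ => rfl
  pair := fun _ _ => rfl

def Iso.comp (τ σ : Iso) : Iso where
  toFun := fun v => τ.toFun (σ.toFun v)
  invFun := fun v => σ.invFun (τ.invFun v)
  left_inv := fun v => by rw [τ.left_inv, σ.left_inv]
  right_inv := fun v => by rw [σ.right_inv, τ.right_inv]
  add := fun u v => by rw [σ.add, τ.add]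
  smul := fun c v => by rw [σ.smul, τ.smul]
  pair := fun v w => by rw [τ.pair, σ.pair]

def Iso.T (w : Fin 8 → ℤ) : Iso where
  toFun := Tmap w
  invFun := Tmap (-w)
  left_inv := Tmap_inv w
  right_inv := fun v => by
    have := Tmap_inv (-w) v
    rwa [neg_neg] at this
  add := Tmap_add w
  smul := Tmap_smul w
  pair := Tmap_pair w

def Iso.S : Iso where
  toFun := Smap
  invFun := Smap
  left_inv := Smap_inv
  right_inv := Smap_inv
  add := Smap_add
  smul := Smap_smul
  pair := Smap_pair

def Iso.N : Iso where
  toFun := Nmap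
  invFun := Nmap
  left_inv := Nmap_inv
  right_inv := Nmap_inv
  add := Nmap_add
  smul := Nmap_smul
  pair := Nmap_pair

def d0 : Fin 10 → ℤ := ![1,0,0,0,0,0,0,0,0,0]
def d1 : Fin 10 → ℤ := ![0,1,0,0,0,0,0,0,0,0]

lemma pair_d0 (v : Fin 10 → ℤ) : E10Pair v d0 = v 1 := by
  rw [E10Pair_expand]
  simp only [(show d0 (0 : Fin 10) = 1 from rfl), (show d0 (1 : Fin 10) = 0 from rfl), (show d0 (2 : Fin 10) = 0 from rfl), (show d0 (3 : Fin 10) = 0 from rfl), (show d0 (4 : Fin 10) = 0 from rfl), (show d0 (5 : Fin 10) = 0 from rfl), (show d0 (6 : Fin 10) = 0 from rfl), (show d0 (7 : Fin 10) = 0 from rfl), (show d0 (8 : Fin 10) = 0 from rfl), (show d0 (9 : Fin 10) = 0 from rfl)]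
  ring

lemma pair_d1 (v : Fin 10 → ℤ) : E10Pair v d1 = v 0 := by
  rw [E10Pair_expand]
  simp only [(show d1 (0 : Fin 10) = 0 from rfl), (show d1 (1 : Fin 10) = 1 from rfl), (show d1 (2 : Fin 10) = 0 from rfl), (show d1 (3 : Fin 10) = 0 from rfl), (show d1 (4 : Fin 10) = 0 from rfl), (show d1 (5 : Fin 10) = 0 from rfl), (show d1 (6 : Fin 10) = 0 from rfl), (show d1 (7 : Fin 10) = 0 from rfl), (show d1 (8 : Fin 10) = 0 from rfl), (show d1 (9 : Fin 10) = 0 from rfl)]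
  ring

lemma pair_d0_left (v : Fin 10 → ℤ) : E10Pair d0 v = v 1 := by
  rw [E10Pair_expand]
  simp only [(show d0 (0 : Fin 10) = 1 from rfl), (show d0 (1 : Fin 10) = 0 from rfl), (show d0 (2 : Fin 10) = 0 from rfl), (show d0 (3 : Fin 10) = 0 from rfl), (show d0 (4 : Fin 10) = 0 from rfl), (show d0 (5 : Fin 10) = 0 from rfl), (show d0 (6 : Fin 10) = 0 from rfl), (show d0 (7 : Fin 10) = 0 from rfl), (show d0 (8 : Fin 10) = 0 from rfl), (show d0 (9 : Fin 10) = 0 from rfl)]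
  ring

lemma pair_d1_left (v : Fin 10 → ℤ) : E10Pair d1 v = v 0 := by
  rw [E10Pair_expand]
  simp only [(show d1 (0 : Fin 10) = 0 from rfl), (show d1 (1 : Fin 10) = 1 from rfl), (show d1 (2 : Fin 10) = 0 from rfl), (show d1 (3 : Fin 10) = 0 from rfl), (show d1 (4 : Fin 10) = 0 from rfl), (show d1 (5 : Fin 10) = 0 from rfl), (show d1 (6 : Fin 10) = 0 from rfl), (show d1 (7 : Fin 10) = 0 from rfl), (show d1 (8 : Fin 10) = 0 from rfl), (show d1 (9 : Fin 10) = 0 from rfl)]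
  ring

lemma split_pair (v w : Fin 10 → ℤ) :
    E10Pair v w = v 0 * w 1 + v 1 * w 0 + E8NegPair (tl v) (tl w) := by
  rw [E10Pair_expand, E8NegPair_expand]
  show _ = _ + _ + (v 2 * (-2*w 2 + w 3) + v 3 * (w 2 - 2*w 3 + w 4)
    + v 4 * (w 3 - 2*w 4 + w 5 + w 9) + v 5 * (w 4 - 2*w 5 + w 6)
    + v 6 * (w 5 - 2*w 6 + w 7) + v 7 * (w 6 - 2*w 7 + w 8)
    + v 8 * (w 7 - 2*w 8) + v 9 * (w 4 - 2*w 9))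
  ring
def Cv (w : Fin 8 → ℤ) : Fin 8 → ℤ :=
  ![w 0 - 2*w 1 + 2*w 7,
    -w 0 + 2*w 1 - 2*w 2 + 2*w 7,
    -w 0 + 2*w 2 - 2*w 3,
    -w 0 + 2*w 3 - 2*w 4,
    -w 0 + 2*w 4 - 2*w 5,
    -w 0 + 2*w 5 - 2*w 6,
    -w 0 + 2*w 6,
    w 0]

lemma Cval0 (w) : Cv w 0 = w 0 - 2*w 1 + 2*w 7 := rfl
lemma Cval1 (w) : Cv w 1 = -w 0 + 2*w 1 - 2*w 2 + 2*w 7 := rfl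
lemma Cval2 (w) : Cv w 2 = -w 0 + 2*w 2 - 2*w 3 := rfl
lemma Cval3 (w) : Cv w 3 = -w 0 + 2*w 3 - 2*w 4 := rfl
lemma Cval4 (w) : Cv w 4 = -w 0 + 2*w 4 - 2*w 5 := rfl
lemma Cval5 (w) : Cv w 5 = -w 0 + 2*w 5 - 2*w 6 := rfl
lemma Cval6 (w) : Cv w 6 = -w 0 + 2*w 6 := rfl
lemma Cval7 (w) : Cv w 7 = w 0 := rfl

lemma normC (z z' : Fin 8 → ℤ) :
    ∑ i, Cv z i * Cv z' i = -4 * E8NegPair z z' := by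
  rw [Fin.sum_univ_eight, E8NegPair_expand]
  simp only [Cval0, Cval1, Cval2, Cval3, Cval4, Cval5, Cval6, Cval7]
  ring
lemma normC_sq (z : Fin 8 → ℤ) :
    ∑ i, (Cv z i)^2 = -4 * E8NegPair z z := by
  rw [← normC]
  simp only [sq]

lemma E8_self_nonpos (z : Fin 8 → ℤ) : 0 ≤ -E8NegPair z z := by
  have h := normC_sq z
  have : (0:ℤ) ≤ ∑ i, (Cv z i)^2 := Finset.sum_nonneg fun i _ => sq_nonneg _
  linarith


set_option maxHeartbeats 4000000 in
lemma E8_self_zero (z : Fin 8 → ℤ) (h : E8NegPair z z = 0) :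
    z 0 = 0 ∧ z 1 = 0 ∧ z 2 = 0 ∧ z 3 = 0 ∧ z 4 = 0 ∧ z 5 = 0 ∧ z 6 = 0 ∧ z 7 = 0 := by
  have hs : ∑ i, (Cv z i)^2 = 0 := by rw [normC_sq, h]; ring
  have hz' : ∀ i : Fin 8, Cv z i = 0 := by
    intro i
    have h2 := (Finset.sum_eq_zero_iff_of_nonneg
      (f := fun i => (Cv z i)^2) (fun i _ => sq_nonneg _)).mp hs i (Finset.mem_univ i)
    exact sq_eq_zero_iff.mp h2
  have h0 := hz' 0; have h1 := hz' 1; have h2 := hz' 2; have h3 := hz' 3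
  have h4 := hz' 4; have h5 := hz' 5; have h6 := hz' 6; have h7 := hz' 7
  rw [Cval0] at h0; rw [Cval1] at h1; rw [Cval2] at h2; rw [Cval3] at h3
  rw [Cval4] at h4; rw [Cval5] at h5; rw [Cval6] at h6; rw [Cval7] at h7
  clear hs hz' h
  refine ⟨by omega, by omega, by omega, by omega, by omega, by omega, by omega, by omega⟩

def wWit (k : Fin 8 → ℤ) (c m : ℤ) : Fin 8 → ℤ :=
  ![2*k 7 + c,
    (m + 2*k 7 + c) - (k 0 - k 7),
    k 2 + k 3 + k 4 + k 5 + k 6 + 5*k 7 + 5*c,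
    k 3 + k 4 + k 5 + k 6 + 4*k 7 + 4*c,
    k 4 + k 5 + k 6 + 3*k 7 + 3*c,
    k 5 + k 6 + 2*k 7 + 2*c,
    k 6 + k 7 + c,
    m + 2*k 7 + c]

lemma wWit0 (k c m) : wWit k c m 0 = 2*k 7 + c := rfl
lemma wWit1 (k c m) : wWit k c m 1 = (m + 2*k 7 + c) - (k 0 - k 7) := rfl
lemma wWit2 (k c m) : wWit k c m 2 = k 2 + k 3 + k 4 + k 5 + k 6 + 5*k 7 + 5*c := rfl
lemma wWit3 (k c m) : wWit k c m 3 = k 3 + k 4 + k 5 + k 6 + 4*k 7 + 4*c := rfl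
lemma wWit4 (k c m) : wWit k c m 4 = k 4 + k 5 + k 6 + 3*k 7 + 3*c := rfl
lemma wWit5 (k c m) : wWit k c m 5 = k 5 + k 6 + 2*k 7 + 2*c := rfl
lemma wWit6 (k c m) : wWit k c m 6 = k 6 + k 7 + c := rfl
lemma wWit7 (k c m) : wWit k c m 7 = m + 2*k 7 + c := rfl

lemma surjS (P : Fin 8 → ℤ) (c : ℤ) (k : Fin 8 → ℤ) (hP : ∀ i, P i = 2 * k i + c)
    (m : ℤ) (hm : P 0 + P 1 + P 2 + P 3 + P 4 + P 5 + P 6 + P 7 = 4 * m) :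
    ∃ w, Cv w = P := by
  have e0 := hP 0; have e1 := hP 1; have e2 := hP 2; have e3 := hP 3
  have e4 := hP 4; have e5 := hP 5; have e6 := hP 6; have e7 := hP 7
  refine ⟨wWit k c m, ?_⟩
  apply funext8 <;>
    simp only [Cval0, Cval1, Cval2, Cval3, Cval4, Cval5, Cval6, Cval7,
      wWit0, wWit1, wWit2, wWit3, wWit4, wWit5, wWit6, wWit7] <;>
    omega

lemma sum_update_sq (X P₀ : Fin 8 → ℤ) (b t : ℤ) (j : Fin 8) :
    ∑ i, (X i - b * Function.update P₀ j (P₀ j + t) i)^2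
      = (∑ i, (X i - b * P₀ i)^2) - (X j - b * P₀ j)^2 + (X j - b * (P₀ j + t))^2 := by
  have h1 : ∑ i, (X i - b * Function.update P₀ j (P₀ j + t) i)^2
      = ∑ i, Function.update (fun i => (X i - b * P₀ i)^2) j ((X j - b * (P₀ j + t))^2) i :=
    Finset.sum_congr rfl (fun i _ => by
      rcases eq_or_ne i j with h | h
      · subst h; simp [Function.update_self]
      · simp [Function.update_of_ne h])
  rw [h1, Finset.sum_update_of_mem (Finset.mem_univ j)]
  have h2 := Finset.sum_eq_sum_sdiff_singleton_add (Finset.mem_univ j)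
    (fun i => (X i - b * P₀ i)^2)
  rw [show (∑ i ∈ Finset.univ \ {j}, (X i - b * P₀ i)^2)
      = (∑ i, (X i - b * P₀ i)^2) - (X j - b * P₀ j)^2 from by linarith]
  ring

lemma sum_update_lin (P₀ : Fin 8 → ℤ) (t : ℤ) (j : Fin 8) :
    ∑ i, Function.update P₀ j (P₀ j + t) i = (∑ i, P₀ i) + t := by
  rw [Finset.sum_update_of_mem (Finset.mem_univ j)]
  have h2 := Finset.sum_eq_sum_sdiff_singleton_add (Finset.mem_univ j) P₀
  rw [show (∑ i ∈ Finset.univ \ {j}, P₀ i) = (∑ i, P₀ i) - P₀ j from by linarith]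
  ring

lemma sum8_explicit (P : Fin 8 → ℤ) :
    ∑ i, P i = P 0 + P 1 + P 2 + P 3 + P 4 + P 5 + P 6 + P 7 := by
  rw [Fin.sum_univ_eight]

set_option maxHeartbeats 1000000 in
lemma parity_fix (X : Fin 8 → ℤ) (b : ℤ) (hb : 0 < b) (P₀ : Fin 8 → ℤ) (c : ℤ)
    (k : Fin 8 → ℤ) (hc : c = 0 ∨ c = 1) (hP : ∀ i, P₀ i = 2 * k i + c)
    (hbound : ∑ i, (X i - b * P₀ i)^2 ≤ 4 * b^2) :
    ∃ (P : Fin 8 → ℤ) (c' : ℤ) (k' : Fin 8 → ℤ), (c' = 0 ∨ c' = 1) ∧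
      (∀ i, P i = 2 * k' i + c') ∧
      (P 0 + P 1 + P 2 + P 3 + P 4 + P 5 + P 6 + P 7) % 4 = 0 ∧
      ∑ i, (X i - b * P i)^2 < 8 * b^2 := by
  have hb2 : 0 < b^2 := by positivity
  by_cases h4 : (P₀ 0 + P₀ 1 + P₀ 2 + P₀ 3 + P₀ 4 + P₀ 5 + P₀ 6 + P₀ 7) % 4 = 0
  · exact ⟨P₀, c, k, hc, hP, h4, by linarith⟩
  have hs2 : (P₀ 0 + P₀ 1 + P₀ 2 + P₀ 3 + P₀ 4 + P₀ 5 + P₀ 6 + P₀ 7) % 4 = 2 := by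
    have e0 := hP 0; have e1 := hP 1; have e2 := hP 2; have e3 := hP 3
    have e4 := hP 4; have e5 := hP 5; have e6 := hP 6; have e7 := hP 7
    omega
  by_cases hz : ∀ i : Fin 8, X i - b * P₀ i = 0
  · -- all errors zero: flip index 0 upward
    refine ⟨Function.update P₀ 0 (P₀ 0 + 2), c, Function.update k 0 (k 0 + 1), hc, ?_, ?_, ?_⟩
    · intro i
      rcases eq_or_ne i 0 with h | h
      · subst h; simp [Function.update_self]; have := hP 0; omega
      · simp [Function.update_of_ne h]; exact hP i
    · have hsum := sum_update_lin P₀ 2 0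
      rw [sum8_explicit] at hsum
      rw [sum8_explicit] at hsum
      omega
    · rw [sum_update_sq]
      have hz0 := hz 0
      have hSig : ∑ i, (X i - b * P₀ i)^2 = 0 :=
        Finset.sum_eq_zero fun i _ => by rw [hz i]; ring
      rw [hSig, hz0]
      nlinarith
  · push_neg at hz
    obtain ⟨j, hj⟩ := hz
    by_cases hsgn : 0 ≤ X j - b * P₀ j
    · -- err j ≥ 1, flip up
      have hj1 : 1 ≤ X j - b * P₀ j := by omega
      refine ⟨Function.update P₀ j (P₀ j + 2), c, Function.update k j (k j + 1), hc, ?_, ?_, ?_⟩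
      · intro i
        rcases eq_or_ne i j with h | h
        · subst h; simp [Function.update_self]; have := hP i; omega
        · simp [Function.update_of_ne h]; exact hP i
      · have hsum := sum_update_lin P₀ 2 j
        rw [sum8_explicit] at hsum
        rw [sum8_explicit] at hsum
        omega
      · rw [sum_update_sq]
        nlinarith [hbound, hj1, hb]
    · have hj1 : X j - b * P₀ j ≤ -1 := by omega
      refine ⟨Function.update P₀ j (P₀ j + (-2)), c, Function.update k j (k j + (-1)), hc,
        ?_, ?_, ?_⟩
      · intro i
        rcases eq_or_ne i j with h | h
        · subst h; simp [Function.update_self]; have := hP i; omega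
        · simp [Function.update_of_ne h]; exact hP i
      · have hsum := sum_update_lin P₀ (-2) j
        rw [sum8_explicit] at hsum
        rw [sum8_explicit] at hsum
        omega
      · rw [sum_update_sq]
        nlinarith [hbound, hj1, hb]

set_option maxHeartbeats 1000000 in
lemma cover_pos (X : Fin 8 → ℤ) (b : ℤ) (hb : 0 < b) :
    ∃ (P : Fin 8 → ℤ) (c : ℤ) (k : Fin 8 → ℤ), (c = 0 ∨ c = 1) ∧
      (∀ i, P i = 2 * k i + c) ∧
      (P 0 + P 1 + P 2 + P 3 + P 4 + P 5 + P 6 + P 7) % 4 = 0 ∧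
      ∑ i, (X i - b * P i)^2 < 8 * b^2 := by
  set k0 : Fin 8 → ℤ := fun i => (X i + b) / (2*b) with hk0
  set p : Fin 8 → ℤ := fun i => 2 * k0 i with hp
  have hrange : ∀ i, -b ≤ X i - b * p i ∧ X i - b * p i < b := by
    intro i
    have h2b : (0:ℤ) < 2*b := by linarith
    have hnn := Int.emod_nonneg (X i + b) (by linarith : (2*b) ≠ 0)
    have hlt := Int.emod_lt_of_pos (X i + b) h2b
    have hrepr : X i - b * p i = (X i + b) % (2*b) - b := by
      rw [Int.emod_def]; simp only [hp, hk0]; ring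
    constructor <;> linarith [hrepr]
  set q : Fin 8 → ℤ := fun i => if 0 ≤ X i - b * p i then p i + 1 else p i - 1 with hq
  have hpair : ∀ i, (X i - b * p i)^2 + (X i - b * q i)^2 ≤ b^2 := by
    intro i
    rcases hrange i with ⟨hl, hr⟩
    by_cases h : 0 ≤ X i - b * p i
    · have hqi : q i = p i + 1 := by rw [hq]; simp only [if_pos h]
      rw [hqi]
      have hmul : (X i - b * p i) * ((X i - b * p i) - b) ≤ 0 :=
        mul_nonpos_of_nonneg_of_nonpos h (by linarith)
      nlinarith [hmul]
    · have hqi : q i = p i - 1 := by rw [hq]; simp only [if_neg h]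
      rw [hqi]
      push_neg at h
      have hmul : (X i - b * p i) * ((X i - b * p i) + b) ≤ 0 :=
        mul_nonpos_of_nonpos_of_nonneg (by linarith) (by linarith)
      nlinarith [hmul]
  have hEF : (∑ i, (X i - b * p i)^2) + (∑ i, (X i - b * q i)^2) ≤ 8 * b^2 := by
    rw [← Finset.sum_add_distrib]
    calc (∑ i : Fin 8, ((X i - b * p i)^2 + (X i - b * q i)^2))
        ≤ ∑ _i : Fin 8, b^2 := Finset.sum_le_sum (fun i _ => hpair i)
      _ = 8 * b^2 := by simp [Finset.sum_const, Finset.card_univ]; try ring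
  by_cases hless : (∑ i, (X i - b * p i)^2) ≤ (∑ i, (X i - b * q i)^2)
  · exact parity_fix X b hb p 0 k0 (Or.inl rfl) (fun i => by rw [hp]; ring)
      (by linarith)
  · refine parity_fix X b hb q 1
      (fun i => if 0 ≤ X i - b * p i then k0 i else k0 i - 1) (Or.inr rfl) ?_ (by linarith)
    intro i
    by_cases h : 0 ≤ X i - b * p i
    · rw [hq]; simp only [if_pos h]; simp only [hp]; try ring
    · rw [hq]; simp only [if_neg h]; simp only [hp]; try ring

lemma cover_posb (z : Fin 8 → ℤ) (b : ℤ) (hb : 0 < b) :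
    ∃ w : Fin 8 → ℤ, -E8NegPair (z - b • w) (z - b • w) < 2 * b^2 := by
  obtain ⟨P, c, k, hc, hP, h4, hlt⟩ := cover_pos (Cv z) b hb
  obtain ⟨m, hm⟩ : ∃ m, P 0 + P 1 + P 2 + P 3 + P 4 + P 5 + P 6 + P 7 = 4 * m :=
    ⟨(P 0 + P 1 + P 2 + P 3 + P 4 + P 5 + P 6 + P 7) / 4, by omega⟩
  obtain ⟨w, hw⟩ := surjS P c k hP m hm
  refine ⟨w, ?_⟩
  have hlin : Cv (z - b • w) = fun i => Cv z i - b * P i := by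
    rw [← hw]
    apply funext8 <;>
      simp only [Cval0, Cval1, Cval2, Cval3, Cval4, Cval5, Cval6, Cval7,
        Pi.sub_apply, Pi.smul_apply, smul_eq_mul] <;> ring
  have hsum : ∑ i, (Cv (z - b • w) i)^2 = ∑ i, (Cv z i - b * P i)^2 := by
    rw [hlin]
  have hnorm := normC_sq (z - b • w)
  rw [hsum] at hnorm
  linarith

lemma tlval0 (v : Fin 10 → ℤ) : tl v 0 = v 2 := rfl
lemma tlval1 (v : Fin 10 → ℤ) : tl v 1 = v 3 := rfl
lemma tlval2 (v : Fin 10 → ℤ) : tl v 2 = v 4 := rfl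
lemma tlval3 (v : Fin 10 → ℤ) : tl v 3 = v 5 := rfl
lemma tlval4 (v : Fin 10 → ℤ) : tl v 4 = v 6 := rfl
lemma tlval5 (v : Fin 10 → ℤ) : tl v 5 = v 7 := rfl
lemma tlval6 (v : Fin 10 → ℤ) : tl v 6 = v 8 := rfl
lemma tlval7 (v : Fin 10 → ℤ) : tl v 7 = v 9 := rfl

lemma d0v0 : d0 0 = 1 := rfl
lemma d0v1 : d0 1 = 0 := rfl
lemma d0v2 : d0 2 = 0 := rfl
lemma d0v3 : d0 3 = 0 := rfl
lemma d0v4 : d0 4 = 0 := rfl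
lemma d0v5 : d0 5 = 0 := rfl
lemma d0v6 : d0 6 = 0 := rfl
lemma d0v7 : d0 7 = 0 := rfl
lemma d0v8 : d0 8 = 0 := rfl
lemma d0v9 : d0 9 = 0 := rfl
lemma d1v0 : d1 0 = 0 := rfl
lemma d1v1 : d1 1 = 1 := rfl
lemma d1v2 : d1 2 = 0 := rfl
lemma d1v3 : d1 3 = 0 := rfl
lemma d1v4 : d1 4 = 0 := rfl
lemma d1v5 : d1 5 = 0 := rfl
lemma d1v6 : d1 6 = 0 := rfl
lemma d1v7 : d1 7 = 0 := rfl
lemma d1v8 : d1 8 = 0 := rfl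
lemma d1v9 : d1 9 = 0 := rfl

lemma cover (z : Fin 8 → ℤ) (b : ℤ) (hb : b ≠ 0) :
    ∃ w : Fin 8 → ℤ, -E8NegPair (z - b • w) (z - b • w) < 2 * b^2 := by
  rcases hb.lt_or_gt with hneg | hpos
  · obtain ⟨w, hw⟩ := cover_posb z (-b) (by linarith)
    refine ⟨-w, ?_⟩
    have h1 : z - b • (-w) = z - (-b) • w := by rw [smul_neg, neg_smul]
    rw [h1]
    have h2 : ((-b):ℤ)^2 = b^2 := by ring
    rwa [h2] at hw
  · exact cover_posb z b hpos

lemma base_case (e g : Fin 10 → ℤ) (he : E10Pair e e = 0) (heg : E10Pair e g = 1)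
    (hb : e 1 = 0) : ∃ σ : Iso, σ.toFun e = d0 := by
  have hsplit := split_pair e e
  rw [he, hb] at hsplit
  have hE8 : E8NegPair (tl e) (tl e) = 0 := by linarith
  obtain ⟨c0, c1, c2, c3, c4, c5, c6, c7⟩ := E8_self_zero (tl e) hE8
  rw [tlval0] at c0; rw [tlval1] at c1; rw [tlval2] at c2; rw [tlval3] at c3
  rw [tlval4] at c4; rw [tlval5] at c5; rw [tlval6] at c6; rw [tlval7] at c7
  have he0 : e 0 * g 1 = 1 := by
    rw [E10Pair_expand] at heg
    rw [hb, c0, c1, c2, c3, c4, c5, c6, c7] at heg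
    linarith
  have hu : IsUnit (e 0) := IsUnit.of_mul_eq_one _ he0
  rw [Int.isUnit_iff] at hu
  rcases hu with h1 | h1
  · refine ⟨Iso.id, ?_⟩
    show e = d0
    apply funext10 <;>
      simp only [d0v0, d0v1, d0v2, d0v3, d0v4, d0v5, d0v6, d0v7, d0v8, d0v9] <;>
      omega
  · refine ⟨Iso.N, ?_⟩
    show Nmap e = d0
    apply funext10 <;>
      simp only [Nval0, Nval1, Nval2, Nval3, Nval4, Nval5, Nval6, Nval7, Nval8, Nval9,
        d0v0, d0v1, d0v2, d0v3, d0v4, d0v5, d0v6, d0v7, d0v8, d0v9] <;>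
      omega

lemma tl_Tmap (w : Fin 8 → ℤ) (e : Fin 10 → ℤ) :
    tl (Tmap w e) = tl e - (e 1) • w := by
  apply funext8 <;>
    simp only [tlval0, tlval1, tlval2, tlval3, tlval4, tlval5, tlval6, tlval7,
      Tval2, Tval3, Tval4, Tval5, Tval6, Tval7, Tval8, Tval9,
      Pi.sub_apply, Pi.smul_apply, smul_eq_mul]

lemma natAbs_lt_of_sq (a b : ℤ) (h0 : 0 ≤ a * b) (h1 : 2 * (a * b) < 2 * b^2) :
    a.natAbs < b.natAbs := by
  by_contra hcon
  push_neg at hcon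
  have h2 : (b.natAbs : ℤ) * b.natAbs ≤ (a.natAbs : ℤ) * b.natAbs := by
    have := Nat.mul_le_mul_right b.natAbs hcon
    exact_mod_cast this
  have h3 : ((a * b).natAbs : ℤ) = a * b := Int.natAbs_of_nonneg h0
  have h4 : (a * b).natAbs = a.natAbs * b.natAbs := Int.natAbs_mul a b
  have h5 : (b.natAbs : ℤ) * b.natAbs = b * b := by exact_mod_cast Int.natAbs_mul_self
  have h6 : (a.natAbs : ℤ) * b.natAbs = a * b := by rw [← h3, h4]; push_cast; ring
  have hbb : b^2 = b * b := sq b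
  linarith
lemma reduce (n : ℕ) : ∀ e g : Fin 10 → ℤ, E10Pair e e = 0 → E10Pair e g = 1 →
    (e 1).natAbs ≤ n → ∃ σ : Iso, σ.toFun e = d0 := by
  induction n with
  | zero =>
    intro e g he heg h1
    exact base_case e g he heg (by omega)
  | succ n ih =>
    intro e g he heg hn
    by_cases hb : e 1 = 0
    · exact base_case e g he heg hb
    · obtain ⟨w, hw⟩ := cover (tl e) (e 1) hb
      have htl : tl (Tmap w e) = tl e - (e 1) • w := tl_Tmap w e
      rw [← htl] at hw
      have hpair : E10Pair (Tmap w e) (Tmap w e) = 0 := by rw [Tmap_pair]; exact he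
      have hsplit := split_pair (Tmap w e) (Tmap w e)
      rw [hpair, Tval1] at hsplit
      have hnn := E8_self_nonpos (tl (Tmap w e))
      -- 0 = e'0 * e1 + e1 * e'0 + E8, so 2 * (e'0 * e1) = -E8 ∈ [0, 2 e1²)
      have hkey : ((Tmap w e) 0).natAbs < (e 1).natAbs := by
        apply natAbs_lt_of_sq
        · linarith
        · linarith
      have hlt : ((Smap (Tmap w e)) 1).natAbs ≤ n := by
        rw [Sval1]; omega
      obtain ⟨σ, hσ⟩ := ih (Smap (Tmap w e)) (Smap (Tmap w g))
        (by rw [Smap_pair, Tmap_pair]; exact he)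
        (by rw [Smap_pair, Tmap_pair]; exact heg) hlt
      exact ⟨σ.comp (Iso.S.comp (Iso.T w)), hσ⟩

lemma main_iso (e f : Fin 10 → ℤ) (he : E10Pair e e = 0) (hf : E10Pair f f = 0)
    (hef : E10Pair e f = 1) : ∃ σ : Iso, σ.toFun e = d0 ∧ σ.toFun f = d1 := by
  obtain ⟨σ₁, hσ₁⟩ := reduce (e 1).natAbs e f he hef le_rfl
  set f₁ := σ₁.toFun f with hf₁def
  have hf₁ : E10Pair f₁ f₁ = 0 := by rw [hf₁def, σ₁.pair]; exact hf
  have hef₁ : E10Pair d0 f₁ = 1 := by rw [← hσ₁, hf₁def, σ₁.pair]; exact hef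
  have h11 : f₁ 1 = 1 := by rw [← pair_d0_left f₁]; exact hef₁
  have hsplit := split_pair f₁ f₁
  rw [hf₁, h11] at hsplit
  have hTd0 : Tmap (tl f₁) d0 = d0 := by
    apply funext10 <;>
      simp only [Tval0, Tval1, Tval2, Tval3, Tval4, Tval5, Tval6, Tval7, Tval8, Tval9,
        pr8_expand, d0v0, d0v1, d0v2, d0v3, d0v4, d0v5, d0v6, d0v7, d0v8, d0v9] <;>
      ring
  have hTf₁ : Tmap (tl f₁) f₁ = d1 := by
    have hpr : pr8 f₁ (tl f₁) = E8NegPair (tl f₁) (tl f₁) := rfl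
    have hhf := hf_spec (tl f₁)
    apply funext10
    · rw [Tval0, d1v0, hpr, h11]
      linarith
    · rw [Tval1, d1v1, h11]
    all_goals
      simp only [Tval2, Tval3, Tval4, Tval5, Tval6, Tval7, Tval8, Tval9, h11,
        tlval0, tlval1, tlval2, tlval3, tlval4, tlval5, tlval6, tlval7,
        d1v2, d1v3, d1v4, d1v5, d1v6, d1v7, d1v8, d1v9]
    all_goals ring
  refine ⟨(Iso.T (tl f₁)).comp σ₁, ?_, ?_⟩
  · show Tmap (tl f₁) (σ₁.toFun e) = d0
    rw [hσ₁, hTd0]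
  · show Tmap (tl f₁) (σ₁.toFun f) = d1
    rw [← hf₁def, hTf₁]

def ext8 (u : Fin 8 → ℤ) : Fin 10 → ℤ :=
  ![0, 0, u 0, u 1, u 2, u 3, u 4, u 5, u 6, u 7]

lemma ext8v0 (u) : ext8 u 0 = 0 := rfl
lemma ext8v1 (u) : ext8 u 1 = 0 := rfl


/-- If `e, f ∈ E₁₀` satisfy `⟨e,e⟩ = ⟨f,f⟩ = 0` and `⟨e,f⟩ = 1`, then the orthogonal
complement `M = {v : ⟨v,e⟩ = 0 ∧ ⟨v,f⟩ = 0}` with the restricted form is isometric to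
the negative definite `E₈` lattice: there is a ℤ-linear bijection `φ : M → ℤ⁸` with
`⟨v, w⟩ = q(φ v, φ w)` for all `v, w ∈ M`, where `q` has Gram matrix `E₈(−1)`. -/
theorem orthogonal_complement_isometric_E8 (e f : Fin 10 → ℤ)
    (he : E10Pair e e = 0) (hf : E10Pair f f = 0) (hef : E10Pair e f = 1)
    (M : Submodule ℤ (Fin 10 → ℤ))
    (hM : ∀ v : Fin 10 → ℤ, v ∈ M ↔ E10Pair v e = 0 ∧ E10Pair v f = 0) :
    ∃ φ : M ≃ₗ[ℤ] (Fin 8 → ℤ),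
      ∀ v w : M, E10Pair (v : Fin 10 → ℤ) (w : Fin 10 → ℤ) = E8NegPair (φ v) (φ w) := by
  obtain ⟨σ, hσe, hσf⟩ := main_iso e f he hf hef
  have pair_inv : ∀ X y : Fin 10 → ℤ, E10Pair (σ.invFun X) y = E10Pair X (σ.toFun y) := by
    intro X y
    have h := σ.pair (σ.invFun X) y
    rw [σ.right_inv] at h
    exact h.symm
  have memM : ∀ u : Fin 8 → ℤ, σ.invFun (ext8 u) ∈ M := by
    intro u
    rw [hM]
    constructor
    · rw [pair_inv, hσe, pair_d0]; rfl
    · rw [pair_inv, hσf, pair_d1]; rfl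
  have hσv0 : ∀ v : Fin 10 → ℤ, v ∈ M → (σ.toFun v) 0 = 0 ∧ (σ.toFun v) 1 = 0 := by
    intro v hv
    rw [hM] at hv
    constructor
    · rw [← pair_d1 (σ.toFun v), ← hσf, σ.pair]; exact hv.2
    · rw [← pair_d0 (σ.toFun v), ← hσe, σ.pair]; exact hv.1
  refine ⟨{ toFun := fun v => tl (σ.toFun ↑v),
            map_add' := ?_, map_smul' := ?_,
            invFun := fun u => ⟨σ.invFun (ext8 u), memM u⟩,
            left_inv := ?_, right_inv := ?_ }, ?_⟩
  · intro u v
    show tl (σ.toFun ↑(u + v)) = tl (σ.toFun ↑u) + tl (σ.toFun ↑v)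
    have h : σ.toFun ↑(u + v) = σ.toFun ↑u + σ.toFun ↑v := by
      rw [Submodule.coe_add]; exact σ.add _ _
    rw [h]; rfl
  · intro c v
    show tl (σ.toFun ↑(c • v)) = (RingHom.id ℤ) c • tl (σ.toFun ↑v)
    have h : σ.toFun ↑(c • v) = c • σ.toFun ↑v := by
      rw [Submodule.coe_smul]; exact σ.smul _ _
    rw [h]; rfl
  · intro v
    apply Subtype.ext
    show σ.invFun (ext8 (tl (σ.toFun ↑v))) = ↑v
    obtain ⟨h0, h1⟩ := hσv0 ↑v v.2
    have hx : ext8 (tl (σ.toFun ↑v)) = σ.toFun ↑v := by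
      apply funext10
      · rw [ext8v0]; exact h0.symm
      · rw [ext8v1]; exact h1.symm
      all_goals rfl
    rw [hx, σ.left_inv]
  · intro u
    show tl (σ.toFun (σ.invFun (ext8 u))) = u
    rw [σ.right_inv]
    apply funext8 <;> rfl
  · intro v w
    show E10Pair ↑v ↑w = E8NegPair (tl (σ.toFun ↑v)) (tl (σ.toFun ↑w))
    obtain ⟨hv0, hv1⟩ := hσv0 ↑v v.2
    obtain ⟨hw0, hw1⟩ := hσv0 ↑w w.2
    have h := σ.pair (↑v) (↑w)
    rw [← h, split_pair, hv0, hv1, hw0, hw1]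
    ring
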